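/- Let $W=\{(W_i,\omega_i)\}_{i\in I}$ be a fusion frame with synthesis operator $T_W$. Then the following are equivalent: (1) every $f\in\mathcal{H}$ has a unique representation $f=\sum_{i\in I}f_i$ with $f_i\in W_i$ (Riesz decomposition); (2) $T_W$ is injective; (3) $T_W^*$ is surjective; (4) $W$ is a fusion Riesz basis. -/

import Mathlib

open scoped InnerProductSpace
open ContinuousLinearMap (adjoint)
set_option maxHeartbeats 1000000
set_option synthInstance.maxHeartbeats 400000
noncomputable section

variable {H : Type*} [NormedAddCommGroup H] [InnerProductSpace ℂ H] [CompleteSpace H]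
variable {ι : Type*} [Countable ι]

/-- The orthogonal projection onto a closed subspace, as an endomorphism of `H`. -/
noncomputable def projL (W : Submodule ℂ H) [CompleteSpace W] : H →L[ℂ] H :=
  W.subtypeL.comp W.orthogonalProjection

/-- `{(W i, ω i)}` is a fusion frame with bounds `A ≤ B`. -/
def IsFusionFrame (W : ι → Submodule ℂ H) [∀ i, CompleteSpace (W i)]
    (ω : ι → ℝ) (A B : ℝ) : Prop :=
  ∀ f : H, ∃ s : ℝ,
    HasSum (fun i => (ω i) ^ 2 * ‖((W i).orthogonalProjection f : H)‖ ^ 2) s ∧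
    A * ‖f‖ ^ 2 ≤ s ∧ s ≤ B * ‖f‖ ^ 2

/-- `{(W i, ω i)}` is a Bessel fusion sequence with bound `B`. -/
def IsBesselFusion (W : ι → Submodule ℂ H) [∀ i, CompleteSpace (W i)]
    (ω : ι → ℝ) (B : ℝ) : Prop :=
  ∀ f : H, ∃ s : ℝ,
    HasSum (fun i => (ω i) ^ 2 * ‖((W i).orthogonalProjection f : H)‖ ^ 2) s ∧
    s ≤ B * ‖f‖ ^ 2

/-- `{(W i, ω i)}` is a fusion Riesz basis with bounds `C ≤ D`. -/
def IsFusionRieszBasisWith (W : ι → Submodule ℂ H) (ω : ι → ℝ) (C D : ℝ) : Prop :=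
  (⨆ i, W i).topologicalClosure = ⊤ ∧ 0 < C ∧ C ≤ D ∧
  ∀ (J : Finset ι) (g : ∀ i, W i),
    C * ∑ j ∈ J, ‖(g j : H)‖ ^ 2 ≤ ‖∑ j ∈ J, ω j • ((g j : H))‖ ^ 2 ∧
    ‖∑ j ∈ J, ω j • ((g j : H))‖ ^ 2 ≤ D * ∑ j ∈ J, ‖(g j : H)‖ ^ 2

/-- `{(W i, ω i)}` is a fusion Riesz basis. -/
def IsFusionRieszBasis (W : ι → Submodule ℂ H) (ω : ι → ℝ) : Prop :=
  ∃ C D : ℝ, IsFusionRieszBasisWith W ω C D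

section Helpers
variable {E : ι → Type*} [∀ i, NormedAddCommGroup (E i)]

omit [Countable ι] in
lemma aux_two_pow (x : ℝ) : x ^ ((2:ENNReal).toReal) = x ^ 2 := by
  rw [ENNReal.toReal_ofNat, Real.rpow_two]

omit [Countable ι] in
lemma aux_hasSum_norm_sq (f : lp E 2) : HasSum (fun i => ‖f i‖ ^ 2) (‖f‖ ^ 2) := by
  have h := lp.hasSum_norm (p := 2) (by norm_num) f
  simp only [aux_two_pow] at h
  exact h

omit [Countable ι] in
lemma aux_memℓp_two {f : ∀ i, E i} (h : Summable fun i => ‖f i‖ ^ 2) : Memℓp f 2 := by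
  apply memℓp_gen
  simp only [aux_two_pow]
  exact h
end Helpers


/-- for a fusion frame `W` with synthesis operator `T_W`, the following are
equivalent: Riesz decomposition property, injectivity of `T_W`, surjectivity of `T_W^*`,
and the fusion Riesz basis property. -/
theorem stmt4 (W : ι → Submodule ℂ H) [∀ i, CompleteSpace (W i)]
    (ω : ι → ℝ) (hω : ∀ i, 0 < ω i) (A B : ℝ) (hA : 0 < A) (hAB : A ≤ B)
    (hframe : IsFusionFrame W ω A B)
    (T : lp (fun i => ↥(W i)) 2 →L[ℂ] H)
    (hT : ∀ f, HasSum (fun i => ω i • ((f i : H))) (T f)) :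
    ((∀ f : H, ∃! g : ∀ i, ↥(W i), HasSum (fun i => ((g i : H))) f) ↔
      Function.Injective T) ∧
    (Function.Injective T ↔ Function.Surjective (adjoint T)) ∧
    (Function.Surjective (adjoint T) ↔ IsFusionRieszBasis W ω) := by

  classical
  have hω0 : ∀ i, (ω i : ℂ) ≠ 0 := fun i => by
    exact_mod_cast (hω i).ne'
  -- squared norm of the coefficient entries
  have hycoe : ∀ (f : H) (i : ι),
      ‖((ω i : ℂ) • ((W i).orthogonalProjection f) : W i)‖ ^ 2
        = ω i ^ 2 * ‖((W i).orthogonalProjection f : H)‖ ^ 2 := by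
    intro f i
    rw [norm_smul, mul_pow, Complex.norm_real, Real.norm_eq_abs,
      abs_of_pos (hω i)]
    rfl
  -- membership of coefficient family in ℓ²
  have hmem : ∀ f : H,
      Memℓp (fun i => ((ω i : ℂ) • ((W i).orthogonalProjection f) : W i)) 2 := by
    intro f
    obtain ⟨s, hs, -, -⟩ := hframe f
    apply aux_memℓp_two
    refine (Summable.congr hs.summable ?_)
    intro i
    exact (hycoe f i).symm
  let Y : H → lp (fun i => ↥(W i)) 2 :=
    fun f => ⟨fun i => (ω i : ℂ) • ((W i).orthogonalProjection f), hmem f⟩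
  have hYapp : ∀ f i, Y f i = (ω i : ℂ) • ((W i).orthogonalProjection f) :=
    fun f i => rfl
  -- norm bounds for Y f
  have hYnorm : ∀ f : H, A * ‖f‖ ^ 2 ≤ ‖Y f‖ ^ 2 ∧ ‖Y f‖ ^ 2 ≤ B * ‖f‖ ^ 2 := by
    intro f
    obtain ⟨s, hs, h1, h2⟩ := hframe f
    have hsY : HasSum (fun i => ‖Y f i‖ ^ 2) s := by
      simp only [hYapp, hycoe]
      exact hs
    have hns : ‖Y f‖ ^ 2 = s := (aux_hasSum_norm_sq (Y f)).unique hsY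
    rw [hns]
    exact ⟨h1, h2⟩
  -- the key inner product identity
  have hinner : ∀ (f : H) (g : lp (fun i => ↥(W i)) 2),
      ⟪f, T g⟫_ℂ = ⟪Y f, g⟫_ℂ := by
    intro f g
    have h1 : HasSum (fun i => ⟪f, ω i • ((g i : H))⟫_ℂ) ⟪f, T g⟫_ℂ :=
      (innerSL ℂ f).hasSum (hT g)
    have h2 : HasSum (fun i => ⟪Y f i, g i⟫_ℂ) ⟪Y f, g⟫_ℂ :=
      lp.hasSum_inner (Y f) g
    have hterm : ∀ i, ⟪f, ω i • ((g i : H))⟫_ℂ = ⟪Y f i, g i⟫_ℂ := by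
      intro i
      rw [hYapp, inner_smul_left, Submodule.inner_orthogonalProjection_eq_of_mem_right,
        ← Complex.coe_smul, inner_smul_right, Complex.conj_ofReal]
    simp only [hterm] at h1
    exact h2.unique h1 |>.symm ▸ rfl
  -- the adjoint of T is the analysis operator Y
  have hadj : ∀ f : H, adjoint T f = Y f := by
    intro f
    refine ext_inner_right ℂ fun g => ?_
    rw [ContinuousLinearMap.adjoint_inner_left, hinner]
  -- norm bound for T
  have hTnorm : ∀ g, ‖T g‖ ≤ Real.sqrt B * ‖g‖ := by
    intro g
    have hB0 : (0:ℝ) < B := lt_of_lt_of_le hA hAB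
    rcases eq_or_ne (T g) 0 with h0 | h0
    · rw [h0, norm_zero]
      positivity
    · have h1 : ‖T g‖ ^ 2 = RCLike.re ⟪T g, T g⟫_ℂ :=
        (inner_self_eq_norm_sq (𝕜 := ℂ) (T g)).symm
      have h2 : RCLike.re ⟪T g, T g⟫_ℂ ≤ ‖Y (T g)‖ * ‖g‖ := by
        rw [hinner]
        exact le_trans (RCLike.re_le_norm _) (norm_inner_le_norm _ _)
      have h3 : ‖Y (T g)‖ ≤ Real.sqrt B * ‖T g‖ := by
        have h4 : ‖Y (T g)‖ ^ 2 ≤ (Real.sqrt B * ‖T g‖) ^ 2 := by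
          rw [mul_pow, Real.sq_sqrt hB0.le]
          exact (hYnorm (T g)).2
        have h5 := Real.sqrt_le_sqrt h4
        rwa [Real.sqrt_sq (norm_nonneg _), Real.sqrt_sq (by positivity)] at h5
      have h5 : ‖T g‖ ^ 2 ≤ Real.sqrt B * ‖T g‖ * ‖g‖ := by
        rw [h1]
        refine h2.trans ?_
        have := norm_nonneg g
        nlinarith
      have hpos : 0 < ‖T g‖ := norm_pos_iff.mpr h0
      nlinarith
  -- surjectivity of T via the frame operator
  have hTsurj : Function.Surjective T := by
    set S := T.comp (adjoint T) with hS
    have hSlow : ∀ f : H, A * ‖f‖ ^ 2 ≤ RCLike.re ⟪S f, f⟫_ℂ := by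
      intro f
      have h1 : ⟪S f, f⟫_ℂ = ⟪adjoint T f, adjoint T f⟫_ℂ := by
        rw [hS]
        exact (ContinuousLinearMap.adjoint_inner_right T (adjoint T f) f).symm
      rw [h1, inner_self_eq_norm_sq, hadj]
      exact (hYnorm f).1
    have hSbound : ∀ f : H, A * ‖f‖ ≤ ‖S f‖ := by
      intro f
      rcases eq_or_ne f 0 with rfl | h0
      · simp
      · have h2 : RCLike.re ⟪S f, f⟫_ℂ ≤ ‖S f‖ * ‖f‖ :=
          le_trans (RCLike.re_le_norm _) (norm_inner_le_norm _ _)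
        have h3 := (hSlow f).trans h2
        have hpos : 0 < ‖f‖ := norm_pos_iff.mpr h0
        nlinarith
    have hanti : AntilipschitzWith (⟨A, hA.le⟩ : NNReal)⁻¹ S := by
      refine ContinuousLinearMap.antilipschitz_of_bound S fun x => ?_
      have h := hSbound x
      have hAc : (((⟨A, hA.le⟩ : NNReal)⁻¹ : NNReal) : ℝ) = A⁻¹ := by
        exact NNReal.coe_inv _
      rw [hAc, inv_mul_eq_div, le_div_iff₀ hA]
      nlinarith
    have hclosed := ContinuousLinearMap.closed_range_of_antilipschitz hanti
    haveI : CompleteSpace S.range := hanti.completeSpace_range_clm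
    have horth : S.range ᗮ = ⊥ := by
      rw [Submodule.eq_bot_iff]
      intro x hx
      have h4 : ⟪S x, x⟫_ℂ = 0 :=
        (Submodule.mem_orthogonal _ x).1 hx (S x) (LinearMap.mem_range_self _ x)
      have h5 := hSlow x
      rw [h4] at h5
      simp only [map_zero] at h5
      have : ‖x‖ ^ 2 ≤ 0 := by nlinarith
      have : ‖x‖ = 0 := by nlinarith [norm_nonneg x, sq_nonneg ‖x‖]
      exact norm_eq_zero.mp this
    have hrange : S.range = ⊤ := Submodule.orthogonal_eq_bot_iff.mp horth
    intro f
    have : f ∈ S.range := hrange ▸ Submodule.mem_top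
    obtain ⟨x, hx⟩ := this
    exact ⟨adjoint T x, hx⟩
  -- density of the span
  have hdense : (⨆ i, W i).topologicalClosure = ⊤ := by
    rw [Submodule.eq_top_iff']
    intro f
    obtain ⟨g, rfl⟩ := hTsurj f
    have hsum := hT g
    have hmemJ : ∀ J : Finset ι,
        (∑ i ∈ J, ω i • ((g i : H))) ∈ ((⨆ i, W i : Submodule ℂ H) : Set H) := by
      intro J
      refine Submodule.sum_mem _ fun i _ => ?_
      rw [← Complex.coe_smul]
      exact Submodule.smul_mem _ _ (le_iSup W i (g i).2)
    have hcl : (T g) ∈ closure ((⨆ i, W i : Submodule ℂ H) : Set H) :=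
      mem_closure_of_tendsto hsum (Filter.Eventually.of_forall hmemJ)
    rw [← SetLike.mem_coe, Submodule.topologicalClosure_coe]
    exact hcl
  -- injectivity of T from surjectivity of the adjoint
  have hinj_of_surj : Function.Surjective (adjoint T) → Function.Injective T := by
    intro hsurj a b hab
    have hz : T (a - b) = 0 := by rw [map_sub, hab, sub_self]
    have hall : ∀ y : lp (fun i => ↥(W i)) 2, ⟪a - b, y⟫_ℂ = 0 := by
      intro y
      obtain ⟨f, rfl⟩ := hsurj y
      rw [ContinuousLinearMap.adjoint_inner_right, hz, inner_zero_left]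
    have h0 := hall (a - b)
    rw [inner_self_eq_zero] at h0
    exact sub_eq_zero.mp h0
  -- finite families as lp elements
  have hfin : ∀ (J : Finset ι) (g : ∀ i, W i),
      ∃ gJ : lp (fun i => ↥(W i)) 2,
        T gJ = ∑ j ∈ J, ω j • ((g j : H)) ∧ ‖gJ‖ ^ 2 = ∑ j ∈ J, ‖(g j : H)‖ ^ 2 := by
    intro J g
    refine ⟨∑ j ∈ J, lp.single 2 j (g j), ?_, ?_⟩
    · have hco : ∀ i ∈ J, ((∑ j ∈ J, lp.single 2 j (g j) : lp (fun i => ↥(W i)) 2) i) = g i := by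
        intro i hi
        simp only [lp.coeFn_sum, Finset.sum_apply]
        rw [Finset.sum_eq_single_of_mem i hi
          (fun j _ hj => by exact lp.single_apply_ne (E := fun i => ↥(W i)) 2 j (g j) (Ne.symm hj))]
        exact lp.single_apply_self (E := fun i => ↥(W i)) 2 i (g i)
      have hz : ∀ i ∉ J,
          ω i • (((∑ j ∈ J, lp.single 2 j (g j) : lp (fun i => ↥(W i)) 2) i : H)) = 0 := by
        intro i hi
        have : ((∑ j ∈ J, lp.single 2 j (g j) : lp (fun i => ↥(W i)) 2) i) = 0 := by
          simp only [lp.coeFn_sum, Finset.sum_apply]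
          refine Finset.sum_eq_zero fun j hj => ?_
          exact lp.single_apply_ne (E := fun i => ↥(W i)) 2 j (g j)
            (fun h => hi (by rw [h]; exact hj))
        rw [this]
        simp
      have h1 := hT (∑ j ∈ J, lp.single 2 j (g j))
      have h2 : HasSum
          (fun i => ω i • (((∑ j ∈ J, lp.single 2 j (g j) : lp (fun i => ↥(W i)) 2) i : H)))
          (∑ i ∈ J, ω i • (((∑ j ∈ J, lp.single 2 j (g j) : lp (fun i => ↥(W i)) 2) i : H))) :=
        hasSum_sum_of_ne_finset_zero hz
      rw [h1.unique h2]
      exact Finset.sum_congr rfl fun i hi => by rw [hco i hi]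
    · have h3 := lp.norm_sum_single (p := 2) (by norm_num) (fun j => g j) J
      simp only [aux_two_pow] at h3
      rw [h3]
      rfl
  -- general uniqueness of representations under the Riesz property
  have huniq_of_riesz : IsFusionRieszBasis W ω →
      ∀ (f : H) (g₁ g₂ : ∀ i, ↥(W i)), HasSum (fun i => ((g₁ i : H))) f →
        HasSum (fun i => ((g₂ i : H))) f → g₁ = g₂ := by
    rintro ⟨C, D, hcl, hC, hCD, hRiesz⟩ f g₁ g₂ h1 h2
    have hd : HasSum (fun i => ((g₁ i : H)) - ((g₂ i : H))) 0 := by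
      simpa using h1.sub h2
    funext j
    set hfam : ∀ i, ↥(W i) := fun i => ((ω i)⁻¹ : ℂ) • (g₁ i - g₂ i) with hfamdef
    have hkey : ∀ i, ω i • ((hfam i : H)) = ((g₁ i : H)) - ((g₂ i : H)) := by
      intro i
      rw [hfamdef]
      simp only [Submodule.coe_smul, Submodule.coe_sub]
      rw [← Complex.coe_smul, smul_smul]
      rw [mul_inv_cancel₀ (by exact_mod_cast (hω i).ne' : ((ω i : ℂ)) ≠ 0)]
      simp
    have hz : ‖(hfam j : H)‖ ^ 2 = 0 := by
      by_contra hne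
      have hpos : 0 < C * ‖(hfam j : H)‖ ^ 2 := by
        have : 0 < ‖(hfam j : H)‖ ^ 2 :=
          lt_of_le_of_ne (by positivity) (Ne.symm hne)
        positivity
      set ε : ℝ := Real.sqrt (C * ‖(hfam j : H)‖ ^ 2) with hε
      have hεpos : 0 < ε := Real.sqrt_pos.mpr hpos
      have hev : ∀ᶠ J : Finset ι in Filter.atTop,
          ‖∑ i ∈ J, (((g₁ i : H)) - ((g₂ i : H)))‖ < ε := by
        have htd : Filter.Tendsto (fun J : Finset ι => ∑ i ∈ J, (((g₁ i : H)) - ((g₂ i : H))))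
            Filter.atTop (nhds 0) := hd
        have := Metric.tendsto_nhds.mp htd ε hεpos
        simpa [dist_eq_norm] using this
      obtain ⟨S, hS⟩ := Filter.eventually_atTop.mp hev
      have hJ := hS (insert j S) (Finset.subset_insert j S)
      have hlow := (hRiesz (insert j S) hfam).1
      have heq : ∑ i ∈ insert j S, ω i • ((hfam i : H))
          = ∑ i ∈ insert j S, (((g₁ i : H)) - ((g₂ i : H))) :=
        Finset.sum_congr rfl fun i _ => hkey i
      have hsingle : C * ‖(hfam j : H)‖ ^ 2 ≤ C * ∑ i ∈ insert j S, ‖(hfam i : H)‖ ^ 2 := by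
        have h8 := Finset.single_le_sum (f := fun i => ‖(hfam i : H)‖ ^ 2)
          (fun i _ => by positivity) (Finset.mem_insert_self j S)
        exact mul_le_mul_of_nonneg_left h8 hC.le
      have hfinal : C * ‖(hfam j : H)‖ ^ 2 < ε ^ 2 := by
        rw [heq] at hlow
        have h9 : ‖∑ i ∈ insert j S, (((g₁ i : H)) - ((g₂ i : H)))‖ ^ 2 < ε ^ 2 := by
          have hnn : (0:ℝ) ≤ ‖∑ i ∈ insert j S, (((g₁ i : H)) - ((g₂ i : H)))‖ :=
            norm_nonneg _
          nlinarith
        linarith [hsingle.trans hlow]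
      rw [hε, Real.sq_sqrt hpos.le] at hfinal
      exact lt_irrefl _ hfinal
    have hfj : hfam j = 0 := by
      have h10 : ‖(hfam j : H)‖ = 0 := by nlinarith [norm_nonneg (hfam j : H)]
      have h11 : (hfam j : H) = 0 := norm_eq_zero.mp h10
      exact Subtype.ext h11
    have h6 : g₁ j - g₂ j = 0 := by
      have h7 := hfj
      rw [hfamdef] at h7
      simp only [smul_eq_zero] at h7
      rcases h7 with h7 | h7
      · exact absurd h7 (inv_ne_zero (hω0 j))
      · exact h7
    exact sub_eq_zero.mp h6
  -- Step 1: unique representation implies injectivity of T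
  have s12 : (∀ f : H, ∃! g : ∀ i, ↥(W i), HasSum (fun i => ((g i : H))) f) →
      Function.Injective T := by
    intro huniq a b hab
    have hz : T (a - b) = 0 := by rw [map_sub, hab, sub_self]
    obtain ⟨g0, hg0, hg0uniq⟩ := huniq 0
    set d : ∀ i, ↥(W i) := fun i => (ω i : ℂ) • ((a - b) i) with hddef
    have hd : HasSum (fun i => ((d i : H))) 0 := by
      have h1 := hT (a - b)
      rw [hz] at h1
      simp only [← Complex.coe_smul] at h1
      simpa only [hddef, Submodule.coe_smul] using h1
    have h2 : HasSum (fun i => (((0 : ∀ i, ↥(W i)) i : H))) 0 := by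
      simpa using hasSum_zero
    have hd0 : d = 0 := (hg0uniq d hd).trans (hg0uniq 0 h2).symm
    have hab0 : a - b = 0 := by
      apply lp.ext
      funext i
      have h3 : d i = 0 := congrFun hd0 i
      rw [hddef] at h3
      simp only [smul_eq_zero] at h3
      rcases h3 with h3 | h3
      · exact absurd h3 (hω0 i)
      · simpa using h3
    exact sub_eq_zero.mp hab0
  -- Step 2: injectivity implies surjectivity of the adjoint
  have s23 : Function.Injective T → Function.Surjective (adjoint T) := by
    intro hinj
    have hker : T.ker = ⊥ := LinearMap.ker_eq_bot.mpr hinj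
    have hrg : T.range = ⊤ := LinearMap.range_eq_top.mpr hTsurj
    have hcomp : (↑(ContinuousLinearEquiv.ofBijective T hker hrg).symm :
        H →L[ℂ] lp (fun i => ↥(W i)) 2).comp T
        = ContinuousLinearMap.id ℂ (lp (fun i => ↥(W i)) 2) := by
      refine ContinuousLinearMap.ext fun g => ?_
      simp only [ContinuousLinearMap.coe_comp', Function.comp_apply,
        ContinuousLinearEquiv.coe_coe, ContinuousLinearMap.id_apply]
      exact ContinuousLinearEquiv.ofBijective_symm_apply_apply T hker hrg g
    have hadj2 := congrArg adjoint hcomp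
    rw [ContinuousLinearMap.adjoint_comp, ContinuousLinearMap.adjoint_id] at hadj2
    intro y
    refine ⟨adjoint (↑(ContinuousLinearEquiv.ofBijective T hker hrg).symm :
      H →L[ℂ] lp (fun i => ↥(W i)) 2) y, ?_⟩
    have := congrArg
      (fun L : lp (fun i => ↥(W i)) 2 →L[ℂ] lp (fun i => ↥(W i)) 2 => L y) hadj2
    simpa using this
  -- Step 3: surjectivity of the adjoint implies the Riesz basis property
  have s34 : Function.Surjective (adjoint T) → IsFusionRieszBasis W ω := by
    intro hsurj
    have hinj := hinj_of_surj hsurj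
    have hker : T.ker = ⊥ := LinearMap.ker_eq_bot.mpr hinj
    have hrg : T.range = ⊤ := LinearMap.range_eq_top.mpr hTsurj
    have hanti := (ContinuousLinearEquiv.ofBijective T hker hrg).antilipschitz
    set c : ℝ := max ((‖(↑(ContinuousLinearEquiv.ofBijective T hker hrg).symm :
      H →L[ℂ] lp (fun i => ↥(W i)) 2)‖₊ : ℝ)) 1 with hc
    have hc1 : (1:ℝ) ≤ c := le_max_right _ _
    have hc0 : (0:ℝ) < c := lt_of_lt_of_le one_pos hc1
    have hlow : ∀ g : lp (fun i => ↥(W i)) 2, ‖g‖ ≤ c * ‖T g‖ := by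
      intro g
      have h := hanti.le_mul_dist g 0
      simp only [dist_zero_right, map_zero,
        ContinuousLinearEquiv.coeFn_ofBijective] at h
      refine h.trans ?_
      have := norm_nonneg (T g)
      have hle : ((‖(↑(ContinuousLinearEquiv.ofBijective T hker hrg).symm :
          H →L[ℂ] lp (fun i => ↥(W i)) 2)‖₊ : ℝ)) ≤ c := le_max_left _ _
      nlinarith
    have hB0 : (0:ℝ) < B := lt_of_lt_of_le hA hAB
    refine ⟨min ((c^2)⁻¹) B, B, hdense, ?_, min_le_right _ _, ?_⟩
    · have : (0:ℝ) < (c^2)⁻¹ := by positivity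
      exact lt_min this hB0
    · intro J g
      obtain ⟨gJ, hgJ1, hgJ2⟩ := hfin J g
      constructor
      · have h1 : ‖gJ‖ ^ 2 ≤ c ^ 2 * ‖T gJ‖ ^ 2 := by
          have := hlow gJ
          nlinarith [norm_nonneg (T gJ), norm_nonneg gJ]
        rw [← hgJ1, ← hgJ2]
        have h2 : min ((c^2)⁻¹) B * ‖gJ‖ ^ 2 ≤ (c^2)⁻¹ * ‖gJ‖ ^ 2 := by
          have := sq_nonneg ‖gJ‖
          nlinarith [min_le_left ((c^2)⁻¹) B]
        refine h2.trans ?_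
        rw [inv_mul_le_iff₀ (by positivity)]
        linarith [h1]
      · rw [← hgJ1, ← hgJ2]
        have h3 := hTnorm gJ
        have h4 : ‖T gJ‖ ^ 2 ≤ (Real.sqrt B) ^ 2 * ‖gJ‖ ^ 2 := by
          nlinarith [norm_nonneg (T gJ), norm_nonneg gJ, Real.sqrt_nonneg B]
        rwa [Real.sq_sqrt hB0.le] at h4
  -- Step 4: the Riesz basis property implies unique representations
  have s41 : IsFusionRieszBasis W ω →
      (∀ f : H, ∃! g : ∀ i, ↥(W i), HasSum (fun i => ((g i : H))) f) := by
    intro hriesz f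
    obtain ⟨g, rfl⟩ := hTsurj f
    refine ⟨fun i => (ω i : ℂ) • (g i), ?_, ?_⟩
    · have h1 := hT g
      simp only [← Complex.coe_smul] at h1
      simpa only [Submodule.coe_smul] using h1
    · intro y hy
      refine huniq_of_riesz hriesz (T g) y _ hy ?_
      have h1 := hT g
      simp only [← Complex.coe_smul] at h1
      simpa only [Submodule.coe_smul] using h1
  exact ⟨⟨s12, fun h => s41 (s34 (s23 h))⟩,
    ⟨s23, fun h => s12 (s41 (s34 h))⟩,
    ⟨s34, fun h => s23 (s12 (s41 h))⟩⟩
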